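/- (Theorem 4) Let γ > 0, let Θ ⊆ ℝ^d be open, let {p_θ(y|x) : θ ∈ Θ} be a family of conditional probability densities with ∫p_θ(y|x)^{1+γ}dy finite for each x, and let (x₁,y₁),…,(xₙ,yₙ) be training samples. Define the empirical conditional scores S_power(p̃, c·p_θ; q̃) = −((1+γ)c^γ/n)∑_i p_θ(y_i|x_i)^γ + (γc^{1+γ}/n)∑_i ∫p_θ(y|x_i)^{1+γ}dy and c_reg(θ) = ((1/n)∑_i p_θ(y_i|x_i)^γ)/((1/n)∑_i ∫p_θ(y|x_i)^{1+γ}dy). Let (ĉ, θ̂) be an optimal solution of minimizing S_power(p̃, c·p_θ; q̃) over c ∈ (0,1], θ ∈ Θ, and suppose c_reg(θ) is continuous in a neighborhood of θ̂. If 0 < ĉ < 1, then θ̂ is a local optimal solution of minimizing S_sphere(p̃, p_θ; q̃) = −((1/n)∑_i p_θ(y_i|x_i)^γ)/((1/n)∑_i ∫p_θ(y|x_i)^{1+γ}dy)^{γ/(1+γ)} over θ ∈ Θ. Otherwise (ĉ = 1), θ̂ is an optimal solution of minimizing S_power(p̃, p_θ; q̃) over θ ∈ Θ. -/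

import Mathlib

open MeasureTheory

/-- (Theorem 4) Let `(ĉ, θ̂)` be an optimal solution of minimizing the empirical
conditional density-power score
`S_power(p̃, c·p_θ; q̃) = −(1+γ)c^γ·A(θ) + γc^{1+γ}·B(θ)` over `c ∈ (0,1]`, `θ ∈ Θ`,
where `A(θ) = (1/n)∑ p_θ(y_i|x_i)^γ` and `B(θ) = (1/n)∑ ∫ p_θ(y|x_i)^{1+γ}dy`, and
suppose `c_reg(θ) = A(θ)/B(θ)` is continuous near `θ̂`. If `0 < ĉ < 1` then `θ̂` is a
local minimizer of the empirical conditional pseudo-spherical score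
`−A(θ)/B(θ)^{γ/(1+γ)}` over `Θ`; otherwise (`ĉ = 1`) `θ̂` minimizes
`S_power(p̃, p_θ; q̃)` over `Θ`. -/
theorem empirical_conditional_density_power_theorem4
    {m d n : ℕ} (hn : 0 < n) (γ : ℝ) (hγ : 0 < γ)
    (Θ : Set (Fin d → ℝ)) (hΘ : IsOpen Θ)
    (p : (Fin d → ℝ) → (Fin m → ℝ) → ℝ → ℝ)
    (hpm : ∀ θ xx, Measurable (p θ xx)) (hp0 : ∀ θ xx y, 0 ≤ p θ xx y)
    (hpi : ∀ θ xx, Integrable (p θ xx)) (hp1 : ∀ θ xx, (∫ y, p θ xx y) = 1)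
    (hpint : ∀ θ xx, Integrable (fun y : ℝ => p θ xx y ^ (1 + γ)))
    (x : Fin n → (Fin m → ℝ)) (y : Fin n → ℝ)
    (A B : (Fin d → ℝ) → ℝ)
    (hA : ∀ θ, A θ = (1 / (n : ℝ)) * ∑ i, p θ (x i) (y i) ^ γ)
    (hB : ∀ θ, B θ = (1 / (n : ℝ)) * ∑ i, ∫ y' : ℝ, p θ (x i) y' ^ (1 + γ))
    (hBpos : ∀ θ ∈ Θ, 0 < B θ)
    (F : ℝ → (Fin d → ℝ) → ℝ)
    (hF : ∀ c θ, F c θ = -(1 + γ) * c ^ γ * A θ + γ * c ^ (1 + γ) * B θ)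
    (creg : (Fin d → ℝ) → ℝ) (hcreg : ∀ θ, creg θ = A θ / B θ)
    (chat : ℝ) (θhat : Fin d → ℝ)
    (hchat : chat ∈ Set.Ioc (0 : ℝ) 1) (hθhat : θhat ∈ Θ)
    (hopt : ∀ c ∈ Set.Ioc (0 : ℝ) 1, ∀ θ ∈ Θ, F chat θhat ≤ F c θ)
    (hcont : ∃ U ∈ nhds θhat, ContinuousOn creg U) :
    (chat < 1 →
      ∃ V ∈ nhds θhat, ∀ θ ∈ V ∩ Θ,
        -(A θhat) / (B θhat) ^ (γ / (1 + γ)) ≤ -(A θ) / (B θ) ^ (γ / (1 + γ))) ∧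
    (chat = 1 → ∀ θ ∈ Θ, F 1 θhat ≤ F 1 θ) := by

  have hc0 := hchat.1
  have hc1 := hchat.2
  have hBh : 0 < B θhat := hBpos θhat hθhat
  have h1γ : (0:ℝ) < 1 + γ := by linarith
  constructor
  · -- interior case
    intro hlt
    -- first-order condition: A θhat = chat * B θhat
    have hFfun : (fun c => F c θhat)
        = fun c => -(1 + γ) * c ^ γ * A θhat + γ * c ^ (1 + γ) * B θhat :=
      funext fun c => hF c θhat
    have hderiv : HasDerivAt (fun c => F c θhat)
        (-(1 + γ) * (γ * chat ^ (γ - 1)) * A θhat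
          + γ * ((1 + γ) * chat ^ ((1 + γ) - 1)) * B θhat) chat := by
      rw [hFfun]
      have h1 : HasDerivAt (fun c : ℝ => c ^ γ) (γ * chat ^ (γ - 1)) chat :=
        Real.hasDerivAt_rpow_const (Or.inl hc0.ne')
      have h2 : HasDerivAt (fun c : ℝ => c ^ (1 + γ)) ((1 + γ) * chat ^ ((1 + γ) - 1)) chat :=
        Real.hasDerivAt_rpow_const (Or.inl hc0.ne')
      exact ((h1.const_mul (-(1 + γ))).mul_const (A θhat)).add
        ((h2.const_mul γ).mul_const (B θhat))
    have hmin : IsLocalMin (fun c => F c θhat) chat := by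
      have hmem : Set.Ioo (0:ℝ) 1 ∈ nhds chat := isOpen_Ioo.mem_nhds ⟨hc0, hlt⟩
      exact Filter.eventually_of_mem hmem fun c hc =>
        hopt c ⟨hc.1, hc.2.le⟩ θhat hθhat
    have hdz : -(1 + γ) * (γ * chat ^ (γ - 1)) * A θhat
        + γ * ((1 + γ) * chat ^ ((1 + γ) - 1)) * B θhat = 0 := by
      rw [← hderiv.deriv]
      exact hmin.deriv_eq_zero
    have hpow : chat ^ ((1 + γ) - 1 : ℝ) = chat ^ (γ - 1 : ℝ) * chat := by
      rw [show (1 + γ) - 1 = (γ - 1) + 1 by ring, Real.rpow_add hc0, Real.rpow_one]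
    rw [hpow] at hdz
    have hfac : γ * (1 + γ) * chat ^ (γ - 1 : ℝ) * (chat * B θhat - A θhat) = 0 := by
      linear_combination hdz
    have hposfac : 0 < γ * (1 + γ) * chat ^ (γ - 1 : ℝ) := by positivity
    have hAB : A θhat = chat * B θhat := by
      rcases mul_eq_zero.mp hfac with h | h
      · exact absurd h hposfac.ne'
      · linarith
    have hcregθhat : creg θhat = chat := by
      rw [hcreg, hAB, mul_div_assoc, div_self hBh.ne', mul_one]
    -- neighborhood
    obtain ⟨U, hU, hcU⟩ := hcont
    have hca : ContinuousAt creg θhat := hcU.continuousAt hU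
    have hV : creg ⁻¹' Set.Ioo 0 1 ∈ nhds θhat :=
      hca.preimage_mem_nhds (isOpen_Ioo.mem_nhds (by rw [hcregθhat]; exact ⟨hc0, hlt⟩))
    refine ⟨creg ⁻¹' Set.Ioo 0 1, hV, ?_⟩
    rintro θ ⟨hθV, hθΘ⟩
    have hcpos : 0 < creg θ := hθV.1
    have hcle : creg θ ≤ 1 := hθV.2.le
    have hBθ : 0 < B θ := hBpos θ hθΘ
    have hAθ : A θ = creg θ * B θ := (div_eq_iff hBθ.ne').mp (hcreg θ).symm
    have key := hopt (creg θ) ⟨hcpos, hcle⟩ θ hθΘ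
    -- compute both sides of key
    have hval : ∀ (c : ℝ), 0 < c → ∀ θ' , A θ' = c * B θ' →
        F c θ' = -(c ^ (1 + γ : ℝ) * B θ') := by
      intro c hc θ' hA'
      rw [hF, hA', Real.rpow_add hc, Real.rpow_one]
      ring
    rw [hval chat hc0 θhat hAB, hval (creg θ) hcpos θ hAθ, neg_le_neg_iff] at key
    -- key : creg θ ^ (1+γ) * B θ ≤ chat ^ (1+γ) * B θhat
    have hexp : (1 + γ) * (1 / (1 + γ)) = 1 := mul_one_div_cancel h1γ.ne'
    have hroot : (creg θ ^ (1 + γ : ℝ) * B θ) ^ (1 / (1 + γ) : ℝ)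
        ≤ (chat ^ (1 + γ : ℝ) * B θhat) ^ (1 / (1 + γ) : ℝ) :=
      Real.rpow_le_rpow (by positivity) key (by positivity)
    have hsplit : ∀ (c : ℝ), 0 < c → ∀ (b : ℝ), 0 < b →
        (c ^ (1 + γ : ℝ) * b) ^ (1 / (1 + γ) : ℝ) = c * b ^ (1 / (1 + γ) : ℝ) := by
      intro c hc b hb
      rw [Real.mul_rpow (by positivity) hb.le, ← Real.rpow_mul hc.le, hexp, Real.rpow_one]
    rw [hsplit chat hc0 (B θhat) hBh, hsplit (creg θ) hcpos (B θ) hBθ] at hroot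
    -- now convert goal
    have hgoal : ∀ (c : ℝ), 0 < c → ∀ θ', A θ' = c * B θ' → 0 < B θ' →
        -(A θ') / B θ' ^ (γ / (1 + γ) : ℝ) = -(c * B θ' ^ (1 / (1 + γ) : ℝ)) := by
      intro c hc θ' hA' hB'
      rw [hA', neg_div]
      congr 1
      rw [mul_div_assoc]
      congr 1
      rw [show (1 / (1 + γ) : ℝ) = 1 - γ / (1 + γ) by field_simp; ring,
        Real.rpow_sub hB', Real.rpow_one]
    rw [hgoal chat hc0 θhat hAB hBh, hgoal (creg θ) hcpos θ hAθ hBθ]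
    exact neg_le_neg hroot
  · intro hce θ hθ
    have := hopt 1 ⟨one_pos, le_refl 1⟩ θ hθ
    rwa [hce] at this
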